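/- Let c₀, c₁, c₂ be real numbers with c₂ < 0, and consider the cubic polynomial p(λ) = λ³ − c₂λ² + c₁λ − c₀ over ℂ. Then all three complex roots of p have negative real part if and only if c₁ > 0, c₀ < 0 and c₂c₁ < c₀. -/

import Mathlib

open Polynomial

private lemma quadAux (u v : ℂ) (hs : (u + v).im = 0) (hp : (u * v).im = 0) :
    (u.im = 0 ∧ v.im = 0) ∨ v = (starRingEnd ℂ) u := by
  simp [Complex.add_im, Complex.mul_im] at hs hp
  rcases eq_or_ne u.im 0 with h | h
  · exact Or.inl ⟨h, by linarith⟩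
  · right
    have hvim : v.im = -u.im := by linarith
    have hvre : v.re = u.re := by
      rw [hvim] at hp
      have : u.im * (v.re - u.re) = 0 := by ring_nf; ring_nf at hp; linarith
      rcases mul_eq_zero.mp this with h' | h'
      · exact absurd h' h
      · linarith
    exact Complex.ext (by simp [hvre]) (by simp [hvim])

private lemma fwdReal (c₀ c₁ c₂ r s t : ℝ) (h1 : r + s + t = c₂) (h2 : r*s + r*t + s*t = c₁)
    (h3 : r*s*t = c₀) (hr : r < 0) (hs : s < 0) (ht : t < 0) :
    0 < c₁ ∧ c₀ < 0 ∧ c₂ * c₁ < c₀ := by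
  have key : c₂ * c₁ - c₀ = (r+s)*((s+t)*(t+r)) := by rw [← h1, ← h2, ← h3]; ring
  have hneg : (r+s)*((s+t)*(t+r)) < 0 :=
    mul_neg_of_neg_of_pos (by linarith) (mul_pos_of_neg_of_neg (by linarith) (by linarith))
  refine ⟨?_, ?_, by linarith⟩
  · nlinarith [mul_pos_of_neg_of_neg hr hs, mul_pos_of_neg_of_neg hr ht,
      mul_pos_of_neg_of_neg hs ht]
  · nlinarith [mul_pos_of_neg_of_neg hr hs]

private lemma fwdPair (c₀ c₁ c₂ r x y : ℝ) (h1 : r + 2*x = c₂) (h2 : 2*r*x + x^2 + y^2 = c₁)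
    (h3 : r*(x^2 + y^2) = c₀) (hr : r < 0) (hx : x < 0) :
    0 < c₁ ∧ c₀ < 0 ∧ c₂ * c₁ < c₀ := by
  have hxy : 0 < x^2 + y^2 := by nlinarith [sq_nonneg y, mul_pos_of_neg_of_neg hx hx]
  have key : c₂ * c₁ - c₀ = 2*x*((r+x)^2 + y^2) := by rw [← h1, ← h2, ← h3]; ring
  have hrx : 0 < (r+x)^2 + y^2 := by
    nlinarith [sq_nonneg y, mul_pos_of_neg_of_neg (show r+x<0 by linarith) (show r+x<0 by linarith)]
  refine ⟨by nlinarith [mul_pos_of_neg_of_neg hr hx],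
    by nlinarith [mul_neg_of_neg_of_pos hr hxy], ?_⟩
  nlinarith [mul_pos hrx (neg_pos.mpr hx)]

private lemma pairCase (c₀ c₁ c₂ r : ℝ) (u : ℂ)
    (h1 : (r:ℂ) + u + (starRingEnd ℂ) u = (c₂:ℂ))
    (h2 : (r:ℂ)*u + (r:ℂ)*(starRingEnd ℂ) u + u*(starRingEnd ℂ) u = (c₁:ℂ))
    (h3 : (r:ℂ)*u*(starRingEnd ℂ) u = (c₀:ℂ))
    (hr : r < 0) (hu : u.re < 0) : 0 < c₁ ∧ c₀ < 0 ∧ c₂ * c₁ < c₀ := by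
  apply fwdPair c₀ c₁ c₂ r u.re u.im _ _ _ hr hu
  · have := congrArg Complex.re h1
    simp [Complex.add_re] at this
    linarith
  · have := congrArg Complex.re h2
    simp [Complex.mul_re, Complex.mul_im] at this
    nlinarith [this]
  · have := congrArg Complex.re h3
    simp [Complex.mul_re, Complex.mul_im] at this
    nlinarith [this]

theorem cubic_all_roots_negative_real_part_iff
    (c₀ c₁ c₂ : ℝ) (hc₂ : c₂ < 0) :
    (∀ z ∈ (X ^ 3 - C (c₂ : ℂ) * X ^ 2 + C (c₁ : ℂ) * X - C (c₀ : ℂ)).roots,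
        z.re < 0) ↔ (0 < c₁ ∧ c₀ < 0 ∧ c₂ * c₁ < c₀) := by
  set p : ℂ[X] := X ^ 3 - C (c₂ : ℂ) * X ^ 2 + C (c₁ : ℂ) * X - C (c₀ : ℂ) with hp
  have hmonic : p.Monic := by unfold p; monicity!
  have hne : p ≠ 0 := hmonic.ne_zero
  have hdeg : p.natDegree = 3 := by unfold p; compute_degree!
  constructor
  · -- forward
    intro hL
    have hcard : p.roots.card = 3 := by
      rw [← hdeg]
      exact (splits_iff_card_roots.mp (IsAlgClosed.splits p))
    obtain ⟨a, b, c, habc⟩ := Multiset.card_eq_three.mp hcard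
    have hfact : p = (X - C a) * (X - C b) * (X - C c) := by
      have := Splits.eq_prod_roots_of_monic (IsAlgClosed.splits p) hmonic
      rw [habc] at this
      simpa [Multiset.map_cons, Multiset.prod_cons, mul_assoc] using this
    have hexp : p = X^3 - C (a+b+c) * X^2 + C (a*b+a*c+b*c) * X - C (a*b*c) := by
      rw [hfact]; simp only [C_add, C_mul]; ring
    have h2 := congrArg (fun q => coeff q 2) hexp
    have h1 := congrArg (fun q => coeff q 1) hexp
    have h0 := congrArg (fun q => coeff q 0) hexp
    simp [hp, add_mul, coeff_C_mul, coeff_X_pow, coeff_X, coeff_C] at h2 h1 h0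
    have hsum : a + b + c = (c₂:ℂ) := by linear_combination h2
    have hp2 : a*b + a*c + b*c = (c₁:ℂ) := h1.symm
    have hp3 : a*b*c = (c₀:ℂ) := h0.symm
    have hra : a.re < 0 := hL a (by rw [habc]; simp)
    have hrb : b.re < 0 := hL b (by rw [habc]; simp)
    have hrc : c.re < 0 := hL c (by rw [habc]; simp)
    -- conjugate of a is a root
    have hconj : (starRingEnd ℂ) a = a ∨ (starRingEnd ℂ) a = b ∨ (starRingEnd ℂ) a = c := by
      have haroot : p.eval a = 0 := by
        have : a ∈ p.roots := by rw [habc]; simp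
        exact (mem_roots'.mp this).2
      have : (starRingEnd ℂ) a ∈ p.roots := by
        rw [mem_roots hne]
        have : p.eval ((starRingEnd ℂ) a) = (starRingEnd ℂ) (p.eval a) := by
          simp [hp, eval_pow, eval_mul, map_sub, map_add, map_mul, map_pow]
        rw [IsRoot, this, haroot, map_zero]
      rw [habc] at this
      simpa using this
    rcases hconj with hca | hca | hca
    · -- a real
      have haim : a.im = 0 := Complex.conj_eq_iff_im.mp hca
      have hbcim : (b + c).im = 0 := by
        have := congrArg Complex.im hsum
        simp [haim] at this
        simp [Complex.add_im]
        linarith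
      have hbcm : (b * c).im = 0 := by
        have := congrArg Complex.im hp2
        simp [Complex.add_im, Complex.mul_im, haim] at this
        have h' : b.im + c.im = 0 := by simpa [Complex.add_im] using hbcim
        have h'' : a.re*(b.im + c.im) = 0 := by rw [h']; ring
        simp [Complex.mul_im]
        nlinarith [this, h'']
      rcases quadAux b c hbcim hbcm with ⟨hbim, hcim⟩ | hcb
      · -- all real
        have ha' : a = ((a.re:ℝ):ℂ) := Complex.ext rfl (by simp [haim])
        have hb' : b = ((b.re:ℝ):ℂ) := Complex.ext rfl (by simp [hbim])
        have hc' : c = ((c.re:ℝ):ℂ) := Complex.ext rfl (by simp [hcim])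
        rw [ha', hb', hc'] at hsum hp2 hp3
        apply fwdReal c₀ c₁ c₂ a.re b.re c.re _ _ _ hra hrb hrc
        · exact_mod_cast hsum
        · exact_mod_cast hp2
        · exact_mod_cast hp3
      · -- b, conj b pair, a real
        have ha' : a = ((a.re:ℝ):ℂ) := Complex.ext rfl (by simp [haim])
        rw [ha', hcb] at hsum hp2 hp3
        exact pairCase c₀ c₁ c₂ a.re b (by linear_combination hsum)
          (by linear_combination hp2) (by linear_combination hp3) hra hrb
    · -- b = conj a, c real
      have hcim : c.im = 0 := by
        have := congrArg Complex.im hsum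
        rw [← hca] at this
        simp at this
        linarith
      have hc' : c = ((c.re:ℝ):ℂ) := Complex.ext rfl (by simp [hcim])
      rw [← hca, hc'] at hsum hp2 hp3
      exact pairCase c₀ c₁ c₂ c.re a (by linear_combination hsum)
        (by linear_combination hp2) (by linear_combination hp3) hrc hra
    · -- c = conj a, b real
      have hbim : b.im = 0 := by
        have := congrArg Complex.im hsum
        rw [← hca] at this
        simp at this
        linarith
      have hb' : b = ((b.re:ℝ):ℂ) := Complex.ext rfl (by simp [hbim])
      rw [← hca, hb'] at hsum hp2 hp3
      exact pairCase c₀ c₁ c₂ b.re a (by linear_combination hsum)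
        (by linear_combination hp2) (by linear_combination hp3) hrb hra
  · -- backward
    rintro ⟨hc₁, hc₀, h3⟩ z hz
    have h := (mem_roots'.mp hz).2
    have h0 : z^3 - (c₂:ℂ)*z^2 + (c₁:ℂ)*z - (c₀:ℂ) = 0 := by simpa [hp, IsRoot] using h
    rw [Complex.ext_iff] at h0
    simp [Complex.mul_re, Complex.mul_im, pow_succ, Complex.add_re] at h0
    set x := z.re
    set y := z.im
    have hre : x^3 - 3*x*y^2 - c₂*(x^2 - y^2) + c₁*x - c₀ = 0 := by nlinarith [h0.1]
    have him : 3*x^2*y - y^3 - 2*c₂*x*y + c₁*y = 0 := by nlinarith [h0.2]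
    by_contra hx
    push_neg at hx
    rcases eq_or_ne y 0 with hy | hy
    · rw [hy] at hre
      nlinarith [mul_nonneg (mul_nonneg hx hx) hx, mul_nonneg hx hx]
    · have hy2 : y^2 = 3*x^2 - 2*c₂*x + c₁ := by
        have h' := mul_left_cancel₀ hy
          (show y * (3*x^2 - y^2 - 2*c₂*x + c₁) = y * 0 by ring_nf; ring_nf at him ⊢; linarith)
        linarith
      have hh1 : x * y^2 = x*(3*x^2 - 2*c₂*x + c₁) := by rw [hy2]
      have hh2 : c₂ * y^2 = c₂*(3*x^2 - 2*c₂*x + c₁) := by rw [hy2]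
      nlinarith [hh1, hh2, hre, mul_nonneg hx (sq_nonneg x),
        mul_nonneg (by linarith : (0:ℝ) ≤ -c₂) (sq_nonneg x),
        mul_nonneg (sq_nonneg c₂) hx, mul_nonneg hc₁.le hx]
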